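/- arXiv:2201.02027 — 2 statements merged into one kernel-verified Lean document; each statement's English description precedes it below -/
import Mathlib

section
/- Let s, t ≥ 1 and let 𝛂 = (α₁,…,α_s) ∈ 𝔻^s and 𝛃 = (β₁,…,β_t) ∈ 𝔻^t be indices. Then for every odd prime p with s + t < p, the following congruence holds in ℤ/pℤ: ∑_{0<m₁<⋯<m_s<p, 0<n₁<⋯<n_t<p, m_s+n_t<p} (∏_{i=1}^{s} sgn(αᵢ)^{mᵢ}·mᵢ^{−|αᵢ|}) · (∏_{j=1}^{t} sgn(βⱼ)^{nⱼ}·nⱼ^{−|βⱼ|}) = sgn(𝛃)·(−1)^{wt(𝛃)}·Z_p(α₁,…,α_s,β_t,…,β₁), where on the right the index is the concatenation of 𝛂 with the reversal of 𝛃. -/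
open Finset

def isgn (a : ℤ) : ℤ := if 0 < a then 1 else -1

def sgnIdx (a : List ℤ) : ℤ := (a.map isgn).prod

def Zp (p : ℕ) (a : List ℤ) : ZMod p :=
  ∑ m ∈ ((Fintype.piFinset fun _ : Fin a.length => Finset.Ioo 0 p).filter
      fun m => ∀ i j : Fin a.length, i < j → m i < m j),
    ∏ i, ((isgn (a.get i) : ZMod p) ^ m i * ((m i : ZMod p) ^ (a.get i).natAbs)⁻¹)

noncomputable def SgnSet (i j : ℕ) : Finset (List ℤ) :=
  ((Fintype.piFinset fun _ : Fin (i + 1) => Finset.Icc (-(i + j + 1 : ℤ)) (i + j + 1)).filter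
      fun a => (∀ l, a l ≠ 0) ∧ ∑ l, |a l| = (i + j + 1 : ℤ)).image List.ofFn

lemma isgn_cases (x : ℤ) : isgn x = 1 ∨ isgn x = -1 := by
  unfold isgn; split <;> simp

lemma aux_fin_cases {u v : ℕ} (k : Fin (u + v)) :
    (∃ i : Fin u, k = Fin.castAdd v i) ∨ (∃ i : Fin v, k = Fin.natAdd u i) := by
  rcases lt_or_ge (k : ℕ) u with h | h
  · exact Or.inl ⟨⟨k, h⟩, by ext; simp⟩
  · refine Or.inr ⟨⟨(k : ℕ) - u, by omega⟩, by ext; simp; omega⟩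

lemma term_key (p : ℕ) [Fact p.Prime] (hodd : Odd p) (u : ℤ) (hu : u = 1 ∨ u = -1) (k n : ℕ)
    (hn : n < p) :
    ((u : ZMod p))^(p - n) * (((p - n : ℕ) : ZMod p)^k)⁻¹ =
      ((u : ZMod p) * (-1)^k) * ((u : ZMod p)^n * ((n : ZMod p)^k)⁻¹) := by
  have hc : ((p - n : ℕ) : ZMod p) = -(n : ZMod p) := by
    push_cast [Nat.cast_sub hn.le]
    simp [ZMod.natCast_self]
  have hsign : ((u : ZMod p))^(p - n) = (u : ZMod p) * (u : ZMod p)^n := by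
    rcases hu with h | h <;> subst h
    · simp
    · push_cast
      have h1 : ((-1 : ZMod p))^(p - n) * (-1 : ZMod p)^n = (-1)^p := by
        rw [← pow_add, Nat.sub_add_cancel hn.le]
      have h2 : ((-1 : ZMod p))^n * (-1 : ZMod p)^n = 1 := by
        rw [← pow_add, ← two_mul, pow_mul]; simp
      calc ((-1 : ZMod p))^(p - n)
          = (-1 : ZMod p)^(p-n) * ((-1 : ZMod p)^n * (-1 : ZMod p)^n) := by rw [h2, mul_one]
        _ = (-1)^p * (-1)^n := by rw [← mul_assoc, h1]
        _ = -1 * (-1)^n := by rw [hodd.neg_one_pow]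
  rw [hc, hsign, neg_pow, mul_inv, ← inv_pow, inv_neg_one]
  ring

lemma Zp_ofFn (p : ℕ) {L : ℕ} (d : Fin L → ℤ) :
    Zp p (List.ofFn d) =
      ∑ m ∈ ((Fintype.piFinset fun _ : Fin L => Finset.Ioo 0 p).filter
          fun m => ∀ i j : Fin L, i < j → m i < m j),
        ∏ i, ((isgn (d i) : ZMod p) ^ m i * ((m i : ZMod p) ^ (d i).natAbs)⁻¹) := by
  unfold Zp
  have hn : (List.ofFn d).length = L := List.length_ofFn
  refine Finset.sum_bij' (fun f _ => f ∘ Fin.cast hn.symm) (fun f _ => f ∘ Fin.cast hn)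
    ?_ ?_ ?_ ?_ ?_
  · intro f hf
    rw [Finset.mem_filter] at hf ⊢
    obtain ⟨hf1, hf2⟩ := hf
    refine ⟨Fintype.mem_piFinset.mpr fun i => Fintype.mem_piFinset.mp hf1 _,
      fun i j hij => hf2 _ _ hij⟩
  · intro f hf
    rw [Finset.mem_filter] at hf ⊢
    obtain ⟨hf1, hf2⟩ := hf
    refine ⟨Fintype.mem_piFinset.mpr fun i => Fintype.mem_piFinset.mp hf1 _,
      fun i j hij => hf2 _ _ hij⟩
  · intro f _; rfl
  · intro f _; rfl
  · intro f _
    refine Fintype.prod_equiv (finCongr hn) _ _ (fun i => ?_)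
    have hget : (List.ofFn d).get i = d (Fin.cast hn i) := by
      rw [List.get_ofFn]
    rw [hget]
    rfl

/-- Lemma 2 of the paper.  For indices `𝛂 ∈ 𝔻^{s+1}`, `𝛃 ∈ 𝔻^{t+1}`
and every odd prime `p` with `(s+1)+(t+1) < p`, the truncated double sum over
`0 < m₁ < ⋯ < m_{s+1} < p`, `0 < n₁ < ⋯ < n_{t+1} < p` with `m_{s+1} + n_{t+1} < p`
equals `sgn(𝛃)·(−1)^{wt 𝛃}·Z_p(𝛂, reverse 𝛃)` in `ℤ/pℤ`. -/
theorem stmt_3 (s t : ℕ) (a : Fin (s + 1) → ℤ) (b : Fin (t + 1) → ℤ)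
    (ha : ∀ i, a i ≠ 0) (hb : ∀ j, b j ≠ 0)
    (p : ℕ) (hp : p.Prime) (hodd : Odd p) (hst : s + 1 + (t + 1) < p) :
    (∑ mn ∈ (((Fintype.piFinset fun _ : Fin (s + 1) => Finset.Ioo 0 p) ×ˢ
          (Fintype.piFinset fun _ : Fin (t + 1) => Finset.Ioo 0 p)).filter
        fun mn => (∀ i j : Fin (s + 1), i < j → mn.1 i < mn.1 j) ∧
          (∀ i j : Fin (t + 1), i < j → mn.2 i < mn.2 j) ∧
          mn.1 (Fin.last s) + mn.2 (Fin.last t) < p),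
      (∏ i, ((isgn (a i) : ZMod p) ^ mn.1 i * ((mn.1 i : ZMod p) ^ (a i).natAbs)⁻¹)) *
        ∏ j, ((isgn (b j) : ZMod p) ^ mn.2 j * ((mn.2 j : ZMod p) ^ (b j).natAbs)⁻¹)) =
    (sgnIdx (List.ofFn b) : ZMod p) * (-1 : ZMod p) ^ (∑ j, (b j).natAbs) *
      Zp p (List.ofFn a ++ (List.ofFn b).reverse) := by
  haveI : Fact p.Prime := ⟨hp⟩
  have hlist : List.ofFn a ++ (List.ofFn b).reverse =
      List.ofFn (Fin.addCases a (fun j : Fin (t+1) => b j.rev) : Fin (s+1+(t+1)) → ℤ) := by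
    apply List.ext_getElem (by simp; omega)
    intro i h1 h2
    rw [List.getElem_ofFn]
    by_cases h : i < s + 1
    · rw [List.getElem_append_left (by simpa using h), List.getElem_ofFn]
      have he : (⟨i, by simp at h2; omega⟩ : Fin (s+1+(t+1))) = Fin.castAdd (t+1) ⟨i, h⟩ := by
        ext; simp
      rw [he, Fin.addCases_left]
    · push_neg at h
      rw [List.getElem_append_right (by simpa using h)]
      rw [List.getElem_reverse, List.getElem_ofFn]
      have hi : i < s + 1 + (t + 1) := by simp at h2; omega
      have he : (⟨i, by simp at h2; omega⟩ : Fin (s+1+(t+1))) =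
          Fin.natAdd (s+1) ⟨i - (s+1), by omega⟩ := by
        ext
        show i = s + 1 + (i - (s+1))
        omega
      rw [he, Fin.addCases_right]
      congr 1
      ext
      simp only [Fin.val_rev, List.length_ofFn]
      omega
  rw [hlist, Zp_ofFn]
  simp only [mul_assoc, Finset.mul_sum]
  refine Finset.sum_bij'
    (fun mn _ => (Fin.addCases mn.1 (fun k => p - mn.2 k.rev) : Fin (s+1+(t+1)) → ℕ))
    (fun f _ => ((fun i => f (Fin.castAdd (t+1) i)),
        (fun j => p - f (Fin.natAdd (s+1) j.rev))))
    ?_ ?_ ?_ ?_ ?_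
  · -- forward membership
    rintro ⟨m, n⟩ hmn
    simp only [Finset.mem_filter, Finset.mem_product, Fintype.mem_piFinset,
      Finset.mem_Ioo] at hmn ⊢
    obtain ⟨⟨hm, hn⟩, hmono1, hmono2, hlast⟩ := hmn
    have hmle : ∀ i, m i ≤ m (Fin.last s) := fun i => by
      rcases eq_or_lt_of_le (Fin.le_last i) with h | h
      · rw [h]
      · exact (hmono1 _ _ h).le
    have hnle : ∀ j, n j ≤ n (Fin.last t) := fun j => by
      rcases eq_or_lt_of_le (Fin.le_last j) with h | h
      · rw [h]
      · exact (hmono2 _ _ h).le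
    constructor
    · intro k
      rcases aux_fin_cases k with ⟨i, rfl⟩ | ⟨i, rfl⟩
      · simp only [Fin.addCases_left]; exact hm i
      · simp only [Fin.addCases_right]
        have h1 := hn i.rev
        omega
    · intro k l hkl
      rcases aux_fin_cases k with ⟨i, rfl⟩ | ⟨i, rfl⟩ <;>
        rcases aux_fin_cases l with ⟨j, rfl⟩ | ⟨j, rfl⟩
      · simp only [Fin.addCases_left]
        exact hmono1 i j hkl
      · simp only [Fin.addCases_left, Fin.addCases_right]
        have h1 := hmle i
        have h2 := hnle j.rev
        omega
      · exfalso
        have := hkl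
        simp only [Fin.lt_def, Fin.coe_castAdd, Fin.coe_natAdd] at this
        have := i.isLt
        have := j.isLt
        omega
      · simp only [Fin.addCases_right]
        have hij : j.rev < i.rev := by
          rw [Fin.rev_lt_rev, Fin.lt_def]
          rw [Fin.lt_def] at hkl
          simp only [Fin.coe_natAdd] at hkl
          omega
        have h4 := hmono2 _ _ hij
        have h5 := hn i.rev
        omega
  · -- backward membership
    intro f hf
    simp only [Finset.mem_filter, Finset.mem_product, Fintype.mem_piFinset,
      Finset.mem_Ioo] at hf ⊢
    obtain ⟨hmem, hmono⟩ := hf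
    refine ⟨⟨fun i => hmem _, fun j => ?_⟩, fun i j hij => ?_, fun i j hij => ?_, ?_⟩
    · have h1 := hmem (Fin.natAdd (s+1) j.rev)
      omega
    · exact hmono _ _ hij
    · have h1 : (Fin.natAdd (s+1) j.rev) < (Fin.natAdd (s+1) i.rev) := by
        simp only [Fin.lt_def, Fin.coe_natAdd, Fin.val_rev]
        have := Fin.lt_iff_val_lt_val.mp hij
        have := i.isLt
        have := j.isLt
        omega
      have h2 := hmono _ _ h1
      have h3 := hmem (Fin.natAdd (s+1) i.rev)
      omega
    · have h1 : (Fin.castAdd (t+1) (Fin.last s)) < (Fin.natAdd (s+1) (Fin.last t).rev) := by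
        simp [Fin.lt_def, Fin.val_rev]
      have h2 := hmono _ _ h1
      have h3 := hmem (Fin.natAdd (s+1) (Fin.last t).rev)
      omega
  · -- left inverse
    rintro ⟨m, n⟩ hmn
    simp only [Finset.mem_filter, Finset.mem_product, Fintype.mem_piFinset,
      Finset.mem_Ioo] at hmn
    have hn := hmn.1.2
    simp only [Fin.addCases_left, Fin.addCases_right, Fin.rev_rev, Prod.mk.injEq]
    refine ⟨by trivial, ?_⟩
    funext j
    have := hn j
    omega
  · -- right inverse
    intro f hf
    simp only [Finset.mem_filter, Fintype.mem_piFinset, Finset.mem_Ioo] at hf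
    funext k
    rcases aux_fin_cases k with ⟨i, rfl⟩ | ⟨i, rfl⟩
    · simp only [Fin.addCases_left]
    · simp only [Fin.addCases_right, Fin.rev_rev]
      have := hf.1 (Fin.natAdd (s+1) i)
      omega
  · -- term equality
    rintro ⟨m, n⟩ hmn
    simp only [Finset.mem_filter, Finset.mem_product, Fintype.mem_piFinset,
      Finset.mem_Ioo] at hmn
    have hnlt : ∀ j, n j < p := fun j => (hmn.1.2 j).2
    have hsg : ((sgnIdx (List.ofFn b) : ℤ) : ZMod p) = ∏ j, ((isgn (b j) : ZMod p)) := by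
      rw [sgnIdx, List.map_ofFn, List.prod_ofFn]
      push_cast
      rfl
    conv_rhs => rw [Fin.prod_univ_add]
    simp only [Fin.addCases_left, Fin.addCases_right]
    have h2 : (∏ j : Fin (t+1), ((isgn (b (Fin.rev j)) : ZMod p) ^ (p - n j.rev) *
          (((p - n j.rev : ℕ) : ZMod p) ^ (b (Fin.rev j)).natAbs)⁻¹)) =
        ((∏ j, (isgn (b j) : ZMod p)) * (-1 : ZMod p) ^ (∑ j, (b j).natAbs)) *
          ∏ j, ((isgn (b j) : ZMod p) ^ n j * ((n j : ZMod p) ^ (b j).natAbs)⁻¹) := by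
      have e1 : (∏ j : Fin (t+1), ((isgn (b (Fin.rev j)) : ZMod p) ^ (p - n j.rev) *
            (((p - n j.rev : ℕ) : ZMod p) ^ (b (Fin.rev j)).natAbs)⁻¹)) =
          ∏ j : Fin (t+1), ((isgn (b j) : ZMod p) ^ (p - n j) *
            (((p - n j : ℕ) : ZMod p) ^ (b j).natAbs)⁻¹) :=
        Fintype.prod_equiv Fin.revPerm _ _ (fun j => by simp)
      rw [e1,
        Finset.prod_congr rfl
          (fun j _ => term_key p hodd _ (isgn_cases (b j)) (b j).natAbs (n j) (hnlt j)),
        Finset.prod_mul_distrib, Finset.prod_mul_distrib, Finset.prod_pow_eq_pow_sum]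
    rw [h2, hsg]
    have hP : (∏ j, (isgn (b j) : ZMod p)) * (∏ j, (isgn (b j) : ZMod p)) = 1 := by
      rw [← Finset.prod_mul_distrib]
      apply Finset.prod_eq_one
      intro j _
      rcases isgn_cases (b j) with h | h <;> rw [h] <;> norm_num
    have hw : ((-1 : ZMod p)) ^ (∑ j, (b j).natAbs) * (-1 : ZMod p) ^ (∑ j, (b j).natAbs) = 1 := by
      rw [← pow_add, ← two_mul, pow_mul]; norm_num
    set A := ∏ i, ((isgn (a i) : ZMod p) ^ m i * ((m i : ZMod p) ^ (a i).natAbs)⁻¹) with hA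
    set B := ∏ j, ((isgn (b j) : ZMod p) ^ n j * ((n j : ZMod p) ^ (b j).natAbs)⁻¹) with hB
    set P := ∏ j, (isgn (b j) : ZMod p) with hP0
    set W := (-1 : ZMod p) ^ (∑ j, (b j).natAbs) with hW0
    linear_combination (-(A*B*W*W)) * hP - (A*B) * hw
end

section
/- Let r ≥ 1 and let 𝐬 = (s₁,…,s_r) ∈ 𝔻^r be an index. Then for every odd prime p, the reversal formula Z_p(s_r,…,s₁) = (−1)^{wt(𝐬)}·sgn(𝐬)·Z_p(s₁,…,s_r) holds in ℤ/pℤ. -/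
open Finset

/-- Generalized `Zp` depending on a function. -/
def Zf (p n : ℕ) (s : Fin n → ℤ) : ZMod p :=
  ∑ m ∈ ((Fintype.piFinset fun _ : Fin n => Finset.Ioo 0 p).filter
      fun m => ∀ i j : Fin n, i < j → m i < m j),
    ∏ i, ((isgn (s i) : ZMod p) ^ m i * ((m i : ZMod p) ^ (s i).natAbs)⁻¹)

lemma Zp_eq_Zf (p : ℕ) (a : List ℤ) : Zp p a = Zf p a.length a.get := rfl

lemma Zf_congr (p : ℕ) {n m : ℕ} (h : n = m) (s : Fin m → ℤ) :
    Zf p m s = Zf p n (fun i => s (Fin.cast h i)) := by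
  subst h; rfl

lemma isgn_mul_self (x : ℤ) : isgn x * isgn x = 1 := by
  unfold isgn; split_ifs <;> ring

lemma eps_pow_sub {p : ℕ} (ho : Odd p) (ε : ZMod p) (hε : ε * ε = 1) {mm : ℕ}
    (hm : mm ≤ p) : ε ^ (p - mm) = ε * ε ^ mm := by
  have hsq : ∀ k : ℕ, ε ^ k * ε ^ k = 1 := by
    intro k
    rw [← mul_pow, hε, one_pow]
  have hp : ε ^ p = ε := by
    obtain ⟨k, hk⟩ := ho
    have hk' : p = 2 * k + 1 := by omega
    have h2 : ε ^ p = ε ^ (2 * k + 1) := congrArg (fun t => ε ^ t) hk'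
    rw [h2, pow_succ, pow_mul, pow_two, hε, one_pow, one_mul]
  have key : ε ^ (p - mm) * ε ^ mm = ε := by
    rw [← pow_add]
    rw [Nat.sub_add_cancel hm, hp]
  calc ε ^ (p - mm) = ε ^ (p - mm) * (ε ^ mm * ε ^ mm) := by rw [hsq, mul_one]
    _ = (ε ^ (p - mm) * ε ^ mm) * ε ^ mm := by ring
    _ = ε * ε ^ mm := by rw [key]

lemma Zf_rev (p n : ℕ) (hp : p.Prime) (ho : Odd p) (s : Fin n → ℤ) :
    Zf p n (fun i => s i.rev) =
      (-1 : ZMod p) ^ (∑ i, (s i).natAbs) * (∏ i, (isgn (s i) : ZMod p)) * Zf p n s := by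
  haveI : Fact p.Prime := ⟨hp⟩
  simp only [Zf, Finset.mul_sum]
  refine Finset.sum_nbij' (fun (m : Fin n → ℕ) (j : Fin n) => p - m j.rev) (fun (m : Fin n → ℕ) (j : Fin n) => p - m j.rev) ?_ ?_ ?_ ?_ ?_
  · intro m hm
    simp only [Finset.mem_filter, Fintype.mem_piFinset, Finset.mem_Ioo] at hm ⊢
    obtain ⟨h1, h2⟩ := hm
    constructor
    · intro j
      have := h1 j.rev
      omega
    · intro i j hij
      have hrev : j.rev < i.rev := Fin.rev_lt_rev.mpr hij
      have h3 := h2 _ _ hrev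
      have := (h1 j.rev).2
      omega
  · intro m hm
    simp only [Finset.mem_filter, Fintype.mem_piFinset, Finset.mem_Ioo] at hm ⊢
    obtain ⟨h1, h2⟩ := hm
    constructor
    · intro j
      have := h1 j.rev
      omega
    · intro i j hij
      have hrev : j.rev < i.rev := Fin.rev_lt_rev.mpr hij
      have h3 := h2 _ _ hrev
      have := (h1 j.rev).2
      omega
  · intro m hm
    simp only [Finset.mem_filter, Fintype.mem_piFinset, Finset.mem_Ioo] at hm
    funext j
    have := hm.1 j
    show p - (p - m j.rev.rev) = m j
    rw [Fin.rev_rev]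
    omega
  · intro m hm
    simp only [Finset.mem_filter, Fintype.mem_piFinset, Finset.mem_Ioo] at hm
    funext j
    have := hm.1 j
    show p - (p - m j.rev.rev) = m j
    rw [Fin.rev_rev]
    omega
  · intro m hm
    simp only [Finset.mem_filter, Fintype.mem_piFinset, Finset.mem_Ioo] at hm
    -- first reindex LHS product over j ↦ j.rev
    have hre : ∏ j, ((isgn (s j.rev) : ZMod p) ^ m j * ((m j : ZMod p) ^ (s j.rev).natAbs)⁻¹)
        = ∏ j, ((isgn (s j) : ZMod p) ^ m j.rev * ((m j.rev : ZMod p) ^ (s j).natAbs)⁻¹) := by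
      rw [← Equiv.prod_comp Fin.revPerm
        (fun j => (isgn (s j) : ZMod p) ^ m j.rev * ((m j.rev : ZMod p) ^ (s j).natAbs)⁻¹)]
      refine Finset.prod_congr rfl fun j _ => ?_
      simp [Fin.rev_rev]
    rw [hre]
    -- now show pointwise factor identity
    have hpt : ∀ j : Fin n,
        ((isgn (s j) : ZMod p) ^ (p - m j.rev) * (((p - m j.rev : ℕ) : ZMod p) ^ (s j).natAbs)⁻¹)
        = ((isgn (s j) : ZMod p) * (-1 : ZMod p) ^ (s j).natAbs) *
          ((isgn (s j) : ZMod p) ^ m j.rev * ((m j.rev : ZMod p) ^ (s j).natAbs)⁻¹) := by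
      intro j
      have hmj := hm.1 j.rev
      have hle : m j.rev ≤ p := le_of_lt hmj.2
      have hcast : ((p - m j.rev : ℕ) : ZMod p) = -(m j.rev : ZMod p) := by
        rw [Nat.cast_sub hle, ZMod.natCast_self, zero_sub]
      have hε : (isgn (s j) : ZMod p) * (isgn (s j) : ZMod p) = 1 := by
        rw [← Int.cast_mul, isgn_mul_self, Int.cast_one]
      rw [hcast, eps_pow_sub ho _ hε hle]
      have hneg : ((-(m j.rev : ZMod p)) ^ (s j).natAbs)⁻¹
          = (-1 : ZMod p) ^ (s j).natAbs * ((m j.rev : ZMod p) ^ (s j).natAbs)⁻¹ := by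
        rw [neg_eq_neg_one_mul, mul_pow, mul_inv, ← inv_pow, inv_neg_one]
      rw [hneg]
      ring
    show _ = _ * ∏ j, ((isgn (s j) : ZMod p) ^ (p - m j.rev) *
        (((p - m j.rev : ℕ) : ZMod p) ^ (s j).natAbs)⁻¹)
    have hBA : (∏ j, ((isgn (s j) : ZMod p) ^ (p - m j.rev) *
          (((p - m j.rev : ℕ) : ZMod p) ^ (s j).natAbs)⁻¹))
        = ((-1 : ZMod p) ^ (∑ i, (s i).natAbs) * ∏ i, (isgn (s i) : ZMod p)) *
          ∏ j, ((isgn (s j) : ZMod p) ^ m j.rev * ((m j.rev : ZMod p) ^ (s j).natAbs)⁻¹) := by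
      rw [Finset.prod_congr rfl (fun j _ => hpt j), Finset.prod_mul_distrib,
        Finset.prod_mul_distrib, Finset.prod_pow_eq_pow_sum]
      ring
    rw [hBA]
    have hC : ((-1 : ZMod p) ^ (∑ i, (s i).natAbs) * ∏ i, (isgn (s i) : ZMod p)) *
        ((-1 : ZMod p) ^ (∑ i, (s i).natAbs) * ∏ i, (isgn (s i) : ZMod p)) = 1 := by
      have h1 : ((-1 : ZMod p) ^ (∑ i, (s i).natAbs)) * ((-1 : ZMod p) ^ (∑ i, (s i).natAbs)) = 1 := by
        rw [← mul_pow]; norm_num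
      have h2 : (∏ i, (isgn (s i) : ZMod p)) * (∏ i, (isgn (s i) : ZMod p)) = 1 := by
        rw [← Finset.prod_mul_distrib]
        refine Finset.prod_eq_one fun i _ => ?_
        rw [← Int.cast_mul, isgn_mul_self, Int.cast_one]
      calc _ = (((-1 : ZMod p) ^ (∑ i, (s i).natAbs)) * ((-1 : ZMod p) ^ (∑ i, (s i).natAbs))) *
            ((∏ i, (isgn (s i) : ZMod p)) * (∏ i, (isgn (s i) : ZMod p))) := by ring
        _ = 1 := by rw [h1, h2, mul_one]
    rw [← mul_assoc, hC, one_mul]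

/-- the reversal formula
`Z_p(s_r,…,s₁) = (−1)^{wt 𝐬}·sgn(𝐬)·Z_p(s₁,…,s_r)` in `ℤ/pℤ` for every odd
prime `p` and every index `𝐬 ∈ 𝔻^r` with `r ≥ 1`. -/
theorem stmt_11 (a : List ℤ) (ha : a ≠ []) (h0 : ∀ x ∈ a, x ≠ 0)
    (p : ℕ) (hp : p.Prime) (ho : Odd p) :
    Zp p a.reverse =
      (-1 : ZMod p) ^ (a.map Int.natAbs).sum * (sgnIdx a : ZMod p) * Zp p a := by
  have hlen : a.length = a.reverse.length := List.length_reverse.symm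
  have hget : (fun i : Fin a.length => a.reverse.get (Fin.cast hlen i))
      = fun i : Fin a.length => a.get i.rev := by
    funext i
    have h1 : (Fin.cast hlen i : ℕ) < a.reverse.length := (Fin.cast hlen i).isLt
    have h2 : (i.rev : ℕ) < a.length := i.rev.isLt
    show a.reverse[(i : ℕ)] = a[(i.rev : ℕ)]
    rw [List.getElem_reverse]
    congr 1
    rw [Fin.val_rev]
    omega
  have hsum : (a.map Int.natAbs).sum = ∑ i, (a.get i).natAbs := by
    conv_lhs => rw [← List.ofFn_get a]
    rw [List.map_ofFn, List.sum_ofFn]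
    rfl
  have hprod : (sgnIdx a : ZMod p) = ∏ i, (isgn (a.get i) : ZMod p) := by
    have : sgnIdx a = ∏ i, isgn (a.get i) := by
      rw [sgnIdx]
      conv_lhs => rw [← List.ofFn_get a]
      rw [List.map_ofFn, List.prod_ofFn]
      rfl
    rw [this]
    push_cast
    rfl
  rw [Zp_eq_Zf p a.reverse, Zf_congr p hlen, Zp_eq_Zf p a, hget, hsum, hprod,
    Zf_rev p a.length hp ho a.get]
end
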